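/- For any real v with v < 0 or v > 1, the function f(x) = ((1-v) + v·x)·x^{-v} is strictly decreasing on the interval (1, ∞). -/

import Mathlib

theorem strictAntiOn_of_v_outside_unit_interval (v : ℝ) (hv : v < 0 ∨ 1 < v) :
    StrictAntiOn (fun x : ℝ => ((1 - v) + v * x) * x ^ (-v)) (Set.Ioi 1) := by
  have hderiv : ∀ x ∈ Set.Ioi (1 : ℝ), HasDerivAt (fun x : ℝ => ((1 - v) + v * x) * x ^ (-v))
      (v * (1 - v) * (x - 1) * x ^ (-v - 1)) x := by
    intro x hx
    have hx1 : (1 : ℝ) < x := hx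
    have hx0 : (0 : ℝ) < x := lt_trans one_pos hx1
    have h1 : HasDerivAt (fun x : ℝ => (1 - v) + v * x) v x := by
      simpa using ((hasDerivAt_id x).const_mul v).const_add (1 - v)
    have h2 : HasDerivAt (fun x : ℝ => x ^ (-v)) (-v * x ^ (-v - 1)) x :=
      Real.hasDerivAt_rpow_const (Or.inl hx0.ne')
    have := h1.mul h2
    refine HasDerivAt.congr_deriv this ?_
    have hxs : x ^ (-v) = x * x ^ (-v - 1) := by
      have h := (Real.rpow_add hx0 1 (-v - 1)).symm
      rw [Real.rpow_one] at h
      rw [show (1 : ℝ) + (-v - 1) = -v by ring] at h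
      exact h.symm
    rw [hxs]
    ring
  apply strictAntiOn_of_deriv_neg (convex_Ioi 1)
  · exact ContinuousOn.mul (by fun_prop) (fun x hx =>
      (Real.continuousAt_rpow_const x (-v) (Or.inl (ne_of_gt (lt_trans one_pos hx)))).continuousWithinAt)
  · intro x hx
    rw [interior_Ioi] at hx
    rw [(hderiv x hx).deriv]
    have hx1 : (1 : ℝ) < x := hx
    have hpow : (0 : ℝ) < x ^ (-v - 1) := Real.rpow_pos_of_pos (lt_trans one_pos hx1) _
    have hvv : v * (1 - v) < 0 := by
      rcases hv with h | h
      · exact mul_neg_of_neg_of_pos h (by linarith)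
      · exact mul_neg_of_pos_of_neg (by linarith) (by linarith)
    have : v * (1 - v) * (x - 1) < 0 := mul_neg_of_neg_of_pos hvv (by linarith)
    exact mul_neg_of_neg_of_pos this hpow
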